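/- Let C be a C*-algebra and F a nonempty collection of closed two-sided ideals of C, with I₀ = ⋂_{I ∈ F} I. Then for every x ∈ C, sup_{I ∈ F} ‖x + I‖_{C/I} = ‖x + I₀‖_{C/I₀}, where ‖x + I‖ = inf{‖x − y‖ : y ∈ I} is the quotient norm. -/

import Mathlib

open Metric

namespace SupQuotAux


variable {C : Type*} [CStarAlgebra C]

/-- Right multiplication bound for the quotient seminorm. -/
lemma infDist_mul_const_le (I : TwoSidedIdeal C) (x c : C) :
    infDist (x * c) (I : Set C) ≤ infDist x (I : Set C) * ‖c‖ := by
  have hne : (I : Set C).Nonempty := ⟨0, I.zero_mem⟩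
  have key : ∀ ε > 0, infDist (x * c) (I : Set C) ≤ (infDist x (I : Set C) + ε) * ‖c‖ := by
    intro ε hε
    obtain ⟨u, hu, hxu⟩ := (infDist_lt_iff hne).mp
      (lt_add_of_pos_right (infDist x (I : Set C)) hε)
    have hm : u * c ∈ (I : Set C) := I.mul_mem_right u c hu
    calc infDist (x * c) (I : Set C) ≤ dist (x * c) (u * c) := infDist_le_dist_of_mem hm
      _ = ‖(x - u) * c‖ := by rw [dist_eq_norm, sub_mul]
      _ ≤ ‖x - u‖ * ‖c‖ := norm_mul_le _ _
      _ ≤ (infDist x (I : Set C) + ε) * ‖c‖ := by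
          have : ‖x - u‖ ≤ infDist x (I : Set C) + ε := by
            rw [← dist_eq_norm]; exact hxu.le
          exact mul_le_mul_of_nonneg_right this (norm_nonneg c)
  have ht : Filter.Tendsto (fun ε : ℝ => (infDist x (I : Set C) + ε) * ‖c‖)
      (nhdsWithin 0 (Set.Ioi 0)) (nhds (infDist x (I : Set C) * ‖c‖)) := by
    have : ContinuousAt (fun ε : ℝ => (infDist x (I : Set C) + ε) * ‖c‖) 0 := by fun_prop
    simpa using this.tendsto.mono_left nhdsWithin_le_nhds
  exact ge_of_tendsto ht <| by
    filter_upwards [self_mem_nhdsWithin] with ε (hε : 0 < ε) using key ε hε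

/-- Submultiplicativity of the quotient seminorm. -/
lemma infDist_mul_le (I : TwoSidedIdeal C) (x y : C) :
    infDist (x * y) (I : Set C) ≤ infDist x (I : Set C) * infDist y (I : Set C) := by
  have hne : (I : Set C).Nonempty := ⟨0, I.zero_mem⟩
  have key : ∀ ε > 0, infDist (x * y) (I : Set C)
      ≤ (infDist x (I : Set C) + ε) * (infDist y (I : Set C) + ε) := by
    intro ε hε
    obtain ⟨u, hu, hxu⟩ := (infDist_lt_iff hne).mp
      (lt_add_of_pos_right (infDist x (I : Set C)) hε)
    obtain ⟨v, hv, hyv⟩ := (infDist_lt_iff hne).mp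
      (lt_add_of_pos_right (infDist y (I : Set C)) hε)
    have hm : u * y + x * v - u * v ∈ (I : Set C) :=
      I.sub_mem (I.add_mem (I.mul_mem_right u y hu) (I.mul_mem_left x v hv))
        (I.mul_mem_right u v hu)
    calc infDist (x * y) (I : Set C) ≤ dist (x * y) (u * y + x * v - u * v) :=
          infDist_le_dist_of_mem hm
      _ = ‖(x - u) * (y - v)‖ := by rw [dist_eq_norm]; congr 1; noncomm_ring
      _ ≤ ‖x - u‖ * ‖y - v‖ := norm_mul_le _ _
      _ ≤ (infDist x (I : Set C) + ε) * (infDist y (I : Set C) + ε) := by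
          have h1 : ‖x - u‖ ≤ infDist x (I : Set C) + ε := by
            rw [← dist_eq_norm]; exact hxu.le
          have h2 : ‖y - v‖ ≤ infDist y (I : Set C) + ε := by
            rw [← dist_eq_norm]; exact hyv.le
          exact mul_le_mul h1 h2 (norm_nonneg _) (add_nonneg infDist_nonneg hε.le)
  have ht : Filter.Tendsto
      (fun ε : ℝ => (infDist x (I : Set C) + ε) * (infDist y (I : Set C) + ε))
      (nhdsWithin 0 (Set.Ioi 0)) (nhds (infDist x (I : Set C) * infDist y (I : Set C))) := by
    have : ContinuousAt
        (fun ε : ℝ => (infDist x (I : Set C) + ε) * (infDist y (I : Set C) + ε)) 0 := by fun_prop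
    simpa using this.tendsto.mono_left nhdsWithin_le_nhds
  exact ge_of_tendsto ht <| by
    filter_upwards [self_mem_nhdsWithin] with ε (hε : 0 < ε) using key ε hε

lemma infDist_pow_le (I : TwoSidedIdeal C) (x : C) (k : ℕ) (hk : k ≠ 0) :
    infDist (x ^ k) (I : Set C) ≤ infDist x (I : Set C) ^ k := by
  induction k with
  | zero => exact absurd rfl hk
  | succ n ih =>
    rcases Nat.eq_zero_or_pos n with hn | hn
    · subst hn; simpa using le_refl _
    · calc infDist (x ^ (n + 1)) (I : Set C) = infDist (x ^ n * x) (I : Set C) := by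
            rw [pow_succ]
        _ ≤ infDist (x ^ n) (I : Set C) * infDist x (I : Set C) := infDist_mul_le I _ x
        _ ≤ infDist x (I : Set C) ^ n * infDist x (I : Set C) := by
            exact mul_le_mul_of_nonneg_right (ih hn.ne') infDist_nonneg
        _ = infDist x (I : Set C) ^ (n + 1) := by rw [pow_succ]



/-- Single-element approximate unit for a two-sided ideal. -/
lemma exists_approx (I : TwoSidedIdeal C) {w : C} (hw : w ∈ I) {ε : ℝ} (hε : 0 < ε) :
    ∃ e : C, e ∈ I ∧ IsSelfAdjoint e ∧ ‖1 - e‖ ≤ 1 ∧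
      ‖w * (1 - e)‖ ≤ ε ∧ ‖(1 - e) * w‖ ≤ ε := by
  letI : PartialOrder C := CStarAlgebra.spectralOrder C
  haveI : StarOrderedRing C := CStarAlgebra.spectralOrderedRing C
  set s : ℝ := 4 * ε ^ 2 with hs_def
  have hs : 0 < s := by positivity
  set a : C := star w * w + w * star w with ha_def
  have ha_mem : a ∈ I := I.add_mem (I.mul_mem_left (star w) w hw) (I.mul_mem_right w (star w) hw)
  have ha_sa : IsSelfAdjoint a := (IsSelfAdjoint.star_mul_self w).add (IsSelfAdjoint.mul_star_self w)
  have ha_nonneg : (0 : C) ≤ a := add_nonneg (star_mul_self_nonneg w) (mul_star_self_nonneg w)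
  have hspec : ∀ l ∈ spectrum ℝ a, 0 ≤ l := fun l hl => spectrum_nonneg_of_nonneg ha_nonneg hl
  have hg_cont : ContinuousOn (fun l : ℝ => (s + l)⁻¹) (spectrum ℝ a) := by
    refine ContinuousOn.inv₀ (by fun_prop) fun l hl => ?_
    have := hspec l hl
    positivity
  have hh_cont : ContinuousOn (fun l : ℝ => l * (s + l)⁻¹) (spectrum ℝ a) :=
    (continuousOn_id' _).mul hg_cont
  set e : C := cfc (fun l : ℝ => l * (s + l)⁻¹) a with he_def
  have he_mem : e ∈ I := by
    have : e = a * cfc (fun l : ℝ => (s + l)⁻¹) a := by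
      rw [he_def, cfc_mul _ _ a (continuousOn_id' _) hg_cont, cfc_id' ℝ a]
    rw [this]
    exact I.mul_mem_right _ _ ha_mem
  have he_sa : IsSelfAdjoint e := cfc_predicate _ a
  have hq : 1 - e = cfc (fun l : ℝ => 1 - l * (s + l)⁻¹) a := by
    rw [he_def, cfc_sub _ _ a (continuousOn_const) hh_cont, cfc_const_one ℝ a]
  have hq_norm : ‖1 - e‖ ≤ 1 := by
    rw [hq]
    refine norm_cfc_le zero_le_one fun l hl => ?_
    have hl0 := hspec l hl
    have hsl : 0 < s + l := by positivity
    rw [Real.norm_eq_abs]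
    rw [abs_le]
    constructor
    · have : l * (s + l)⁻¹ ≤ 1 := by
        rw [← div_eq_mul_inv, div_le_one hsl]; linarith
      linarith
    · have : 0 ≤ l * (s + l)⁻¹ := by positivity
      linarith
  have hkey : ‖(1 - e) * a * (1 - e)‖ ≤ ε ^ 2 := by
    have : (1 - e) * a * (1 - e)
        = cfc (fun l : ℝ => (1 - l * (s + l)⁻¹) * l * (1 - l * (s + l)⁻¹)) a := by
      rw [cfc_mul (fun l : ℝ => (1 - l * (s + l)⁻¹) * l) (fun l : ℝ => 1 - l * (s + l)⁻¹) a
        ((continuousOn_const.sub hh_cont).mul (continuousOn_id' _))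
        (continuousOn_const.sub hh_cont),
        cfc_mul (fun l : ℝ => 1 - l * (s + l)⁻¹) (fun l : ℝ => l) a
          (continuousOn_const.sub hh_cont) (continuousOn_id' _), hq, cfc_id' ℝ a]
    rw [this]
    refine norm_cfc_le (by positivity) fun l hl => ?_
    have hl0 := hspec l hl
    have hsl : 0 < s + l := by positivity
    rw [Real.norm_eq_abs]
    have hval : (1 - l * (s + l)⁻¹) * l * (1 - l * (s + l)⁻¹) = s ^ 2 * l / (s + l) ^ 2 := by
      field_simp
      ring
    rw [hval, abs_of_nonneg (by positivity)]
    rw [div_le_iff₀ (by positivity)]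
    have h4 : 4 * (s * l) ≤ (s + l) ^ 2 := by nlinarith [sq_nonneg (s - l)]
    have hε2 : ε ^ 2 = s / 4 := by rw [hs_def]; ring
    rw [hε2]
    rw [div_mul_eq_mul_div, le_div_iff₀ (by norm_num)]
    nlinarith [sq_nonneg (s - l), hs, hl0]
  have hq_sa : IsSelfAdjoint (1 - e) := (IsSelfAdjoint.one C).sub he_sa
  have main : ∀ z : C, z * star z ≤ a → ‖(1 - e) * z‖ ≤ ε := by
    intro z hza
    have h1 : ((1 - e) * z) * star ((1 - e) * z) = (1 - e) * (z * star z) * (1 - e) := by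
      rw [star_mul, hq_sa.star_eq]
      simp only [mul_assoc]
    have h2 : (1 - e) * (z * star z) * (1 - e) ≤ (1 - e) * a * (1 - e) := by
      have := star_left_conjugate_le_conjugate hza (1 - e)
      rwa [hq_sa.star_eq] at this
    have h3 : (0 : C) ≤ (1 - e) * (z * star z) * (1 - e) := by
      have := star_left_conjugate_nonneg (mul_star_self_nonneg z) (1 - e)
      rwa [hq_sa.star_eq] at this
    have h4 : ‖(1 - e) * (z * star z) * (1 - e)‖ ≤ ‖(1 - e) * a * (1 - e)‖ :=
      CStarAlgebra.norm_le_norm_of_nonneg_of_le h3 h2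
    have h5 : ‖(1 - e) * z‖ ^ 2 ≤ ε ^ 2 := by
      calc ‖(1 - e) * z‖ ^ 2 = ‖((1 - e) * z) * star ((1 - e) * z)‖ := by
            rw [CStarRing.norm_self_mul_star, sq]
        _ = ‖(1 - e) * (z * star z) * (1 - e)‖ := by rw [h1]
        _ ≤ ‖(1 - e) * a * (1 - e)‖ := h4
        _ ≤ ε ^ 2 := hkey
    nlinarith [norm_nonneg ((1 - e) * z), sq_nonneg (‖(1 - e) * z‖ - ε)]
  refine ⟨e, he_mem, he_sa, hq_norm, ?_, ?_⟩
  · have := main (star w) (by rw [star_star]; exact le_add_of_nonneg_right (mul_star_self_nonneg w))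
    calc ‖w * (1 - e)‖ = ‖star (w * (1 - e))‖ := (norm_star _).symm
      _ = ‖(1 - e) * star w‖ := by
          rw [star_mul, hq_sa.star_eq]
      _ ≤ ε := this
  · exact main w (le_add_of_nonneg_left (star_mul_self_nonneg w) : w * star w ≤ a)



variable {C : Type*} [CStarAlgebra C]

lemma star_mem (I : TwoSidedIdeal C) (hI : IsClosed (I : Set C)) {w : C} (hw : w ∈ I) :
    star w ∈ I := by
  have : star w ∈ closure (I : Set C) := by
    rw [Metric.mem_closure_iff]
    intro ε hε
    obtain ⟨e, he_mem, he_sa, -, hwe, -⟩ := exists_approx I hw (half_pos hε)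
    refine ⟨e * star w, I.mul_mem_right e (star w) he_mem, ?_⟩
    have h1 : star w - e * star w = star (w * (1 - e)) := by
      rw [star_mul, star_sub, star_one, he_sa.star_eq, sub_mul, one_mul]
    rw [dist_eq_norm, h1, norm_star]
    exact lt_of_le_of_lt hwe (half_lt_self hε)
  rwa [hI.closure_eq] at this

lemma infDist_star_le (I : TwoSidedIdeal C) (hI : IsClosed (I : Set C)) (x : C) :
    infDist (star x) (I : Set C) ≤ infDist x (I : Set C) := by
  refine le_of_forall_pos_le_add fun ε hε => ?_
  obtain ⟨y, hy, hxy⟩ := (infDist_lt_iff ⟨0, I.zero_mem⟩).mp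
    (lt_add_of_pos_right (infDist x (I : Set C)) hε)
  calc infDist (star x) (I : Set C) ≤ dist (star x) (star y) :=
        infDist_le_dist_of_mem (star_mem I hI hy)
    _ = dist x y := by rw [dist_eq_norm, dist_eq_norm, ← star_sub, norm_star]
    _ ≤ infDist x (I : Set C) + ε := hxy.le

lemma infDist_star (I : TwoSidedIdeal C) (hI : IsClosed (I : Set C)) (x : C) :
    infDist (star x) (I : Set C) = infDist x (I : Set C) := by
  refine le_antisymm (infDist_star_le I hI x) ?_
  have := infDist_star_le I hI (star x)
  rwa [star_star] at this

/-- Kernel lemma: if the quotient seminorm of a selfadjoint `a` is `< t`, then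
`(a - t)₊` lies in the ideal. -/
lemma cfc_max_sub_mem (I : TwoSidedIdeal C) (hI : IsClosed (I : Set C)) {a : C}
    (ha : IsSelfAdjoint a) {t : ℝ} (ht : 0 < t)
    (hd : infDist a (I : Set C) < t) :
    cfc (fun l : ℝ => max (l - t) 0) a ∈ I := by
  set d := infDist a (I : Set C) with hd_def
  have hd0 : 0 ≤ d := infDist_nonneg
  set u : C := cfc (fun l : ℝ => max (l - t) 0) a with hu_def
  have key : ∀ k : ℕ, k ≠ 0 → infDist u (I : Set C) ≤ d ^ k * (t / t ^ k) := by
    intro k hk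
    set g : ℝ → ℝ := fun l => max (l - t) 0 / (max l t) ^ k with hg_def
    have hg_cont : Continuous g := by
      apply Continuous.div (by fun_prop) (by fun_prop)
      intro l
      exact ne_of_gt (pow_pos (lt_of_lt_of_le ht (le_max_right l t)) k)
    have factor : u = a ^ k * cfc g a := by
      rw [hu_def, ← cfc_pow_id (R := ℝ) a k, ← cfc_mul _ _ a (by fun_prop) hg_cont.continuousOn]
      apply cfc_congr
      intro l _
      rcases le_or_gt l t with hlt | hlt
      · simp [g, max_eq_right (sub_nonpos.mpr hlt)]
      · have h1 : max l t = l := max_eq_left hlt.le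
        have h2 : max (l - t) 0 = l - t := max_eq_left (by linarith)
        have hl0 : l ≠ 0 := ne_of_gt (ht.trans hlt)
        simp only [g, h1, h2]
        field_simp
    have hg_norm : ‖cfc g a‖ ≤ t / t ^ k := by
      refine norm_cfc_le (by positivity) fun l _ => ?_
      have hM : t ≤ max l t := le_max_right l t
      have hM0 : 0 < max l t := lt_of_lt_of_le ht hM
      rw [Real.norm_eq_abs, abs_of_nonneg (by positivity)]
      rw [hg_def]
      rw [div_le_div_iff₀ (by positivity) (by positivity)]
      obtain ⟨j, rfl⟩ : ∃ j, k = j + 1 := ⟨k - 1, (Nat.succ_pred_eq_of_pos (Nat.pos_of_ne_zero hk)).symm⟩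
      calc max (l - t) 0 * t ^ (j + 1) ≤ max l t * t ^ (j + 1) := by
            have : max (l - t) 0 ≤ max l t := max_le_max (by linarith) ht.le
            exact mul_le_mul_of_nonneg_right this (by positivity)
        _ = (max l t * t) * t ^ j := by ring
        _ ≤ (max l t * t) * (max l t) ^ j := by
            exact mul_le_mul_of_nonneg_left (pow_le_pow_left₀ ht.le hM j) (by positivity)
        _ = t * (max l t) ^ (j + 1) := by ring
    calc infDist u (I : Set C) ≤ infDist (a ^ k) (I : Set C) * ‖cfc g a‖ := by
          rw [factor]; exact infDist_mul_const_le I _ _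
      _ ≤ d ^ k * (t / t ^ k) := by
          refine mul_le_mul (infDist_pow_le I a k hk) hg_norm (norm_nonneg _) (by positivity)
  have hzero : infDist u (I : Set C) = 0 := by
    refine le_antisymm ?_ infDist_nonneg
    refine le_of_forall_pos_le_add fun ε hε => ?_
    have hr : d / t < 1 := (div_lt_one ht).mpr hd
    have hr0 : 0 ≤ d / t := by positivity
    obtain ⟨n, hn⟩ := exists_pow_lt_of_lt_one (div_pos hε ht) hr
    have : infDist u (I : Set C) ≤ d ^ (n + 1) * (t / t ^ (n + 1)) := key (n + 1) n.succ_ne_zero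
    have heq : d ^ (n + 1) * (t / t ^ (n + 1)) = t * (d / t) ^ (n + 1) := by
      rw [div_pow]
      field_simp
    have hle : (d / t) ^ (n + 1) ≤ (d / t) ^ n := pow_le_pow_of_le_one hr0 hr.le n.le_succ
    have : infDist u (I : Set C) ≤ t * (d / t) ^ n := by
      rw [heq] at this
      calc infDist u (I : Set C) ≤ t * (d / t) ^ (n + 1) := this
        _ ≤ t * (d / t) ^ n := mul_le_mul_of_nonneg_left hle ht.le
    calc infDist u (I : Set C) ≤ t * (d / t) ^ n := this
      _ ≤ t * (ε / t) := mul_le_mul_of_nonneg_left hn.le ht.le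
      _ = ε := by field_simp
      _ ≤ 0 + ε := by linarith
  exact (hI.mem_iff_infDist_zero ⟨0, I.zero_mem⟩).mpr hzero

/-- C⋆-inequality for the quotient seminorm. -/
lemma infDist_sq_le (I : TwoSidedIdeal C) (x : C) :
    infDist x (I : Set C) ^ 2 ≤ infDist (star x * x) (I : Set C) := by
  have hne : (I : Set C).Nonempty := ⟨0, I.zero_mem⟩
  refine le_of_forall_pos_le_add fun ε hε => ?_
  obtain ⟨v, hv, hcv⟩ := (infDist_lt_iff hne).mp
    (lt_add_of_pos_right (infDist (star x * x) (I : Set C)) (half_pos hε))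
  obtain ⟨e, he_mem, he_sa, hq_norm, hve, -⟩ := exists_approx I hv (half_pos hε)
  have hxe : x * e ∈ (I : Set C) := I.mul_mem_left x e he_mem
  have step1 : infDist x (I : Set C) ≤ ‖x * (1 - e)‖ := by
    have : x * (1 - e) = x - x * e := by rw [mul_sub, mul_one]
    rw [this, ← dist_eq_norm]
    exact infDist_le_dist_of_mem hxe
  have step2 : ‖x * (1 - e)‖ ^ 2 = ‖(1 - e) * (star x * x) * (1 - e)‖ := by
    have h1 : star (x * (1 - e)) * (x * (1 - e)) = (1 - e) * (star x * x) * (1 - e) := by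
      rw [star_mul, ((IsSelfAdjoint.one C).sub he_sa).star_eq]
      simp only [mul_assoc]
    rw [sq, ← CStarRing.norm_star_mul_self, h1]
  have step3 : ‖(1 - e) * (star x * x) * (1 - e)‖ ≤ dist (star x * x) v + ε / 2 := by
    calc ‖(1 - e) * (star x * x) * (1 - e)‖
        ≤ ‖1 - e‖ * ‖(star x * x) * (1 - e)‖ := by
          rw [mul_assoc]; exact norm_mul_le _ _
      _ ≤ ‖(star x * x) * (1 - e)‖ := by
          have h0 : (0:ℝ) ≤ ‖(star x * x) * (1 - e)‖ := norm_nonneg _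
          nlinarith [hq_norm]
      _ = ‖(star x * x - v) * (1 - e) + v * (1 - e)‖ := by rw [← add_mul, sub_add_cancel]
      _ ≤ ‖(star x * x - v) * (1 - e)‖ + ‖v * (1 - e)‖ := norm_add_le _ _
      _ ≤ ‖star x * x - v‖ * ‖1 - e‖ + ε / 2 := add_le_add (norm_mul_le _ _) hve
      _ ≤ ‖star x * x - v‖ + ε / 2 := by
          have h0 : (0:ℝ) ≤ ‖star x * x - v‖ := norm_nonneg _
          nlinarith [hq_norm]
      _ = dist (star x * x) v + ε / 2 := by rw [dist_eq_norm]
  calc infDist x (I : Set C) ^ 2 ≤ ‖x * (1 - e)‖ ^ 2 :=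
        pow_le_pow_left₀ infDist_nonneg step1 2
    _ = ‖(1 - e) * (star x * x) * (1 - e)‖ := step2
    _ ≤ dist (star x * x) v + ε / 2 := step3
    _ ≤ infDist (star x * x) (I : Set C) + ε := by linarith


end SupQuotAux

open SupQuotAux

/-- Let `C` be a C*-algebra and `F` a nonempty collection of closed
two-sided ideals of `C`, with `I₀ = ⋂_{I ∈ F} I`. Then for every `x ∈ C`,
`sup_{I ∈ F} ‖x + I‖ = ‖x + I₀‖`, where the quotient norm `‖x + I‖ = inf {‖x - y‖ : y ∈ I}`
is expressed as the distance from `x` to the ideal. -/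
theorem sup_quotient_norm_eq_quotient_norm_inter
    {C : Type} [NormedRing C] [StarRing C] [CStarRing C] [CompleteSpace C]
    [NormedAlgebra ℂ C] [StarModule ℂ C]
    (F : Set (TwoSidedIdeal C)) (hF : F.Nonempty)
    (hclosed : ∀ I ∈ F, IsClosed (I : Set C)) (x : C) :
    (⨆ I ∈ F, Metric.infDist x (I : Set C)) = Metric.infDist x (⋂ I ∈ F, (I : Set C)) := by
  letI : CStarAlgebra C := {}
  -- the intersection as a two-sided ideal
  set T : Set C := ⋂ I ∈ F, (I : Set C) with hT_def
  have hmemT : ∀ z : C, z ∈ T ↔ ∀ I ∈ F, z ∈ I := by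
    intro z; simp [hT_def, Set.mem_iInter₂]
  let J0 : TwoSidedIdeal C := TwoSidedIdeal.mk' T
    ((hmemT 0).mpr fun I _ => I.zero_mem)
    (fun {a b} ha hb => (hmemT _).mpr fun I hI =>
      I.add_mem ((hmemT a).mp ha I hI) ((hmemT b).mp hb I hI))
    (fun {a} ha => (hmemT _).mpr fun I hI => I.neg_mem ((hmemT a).mp ha I hI))
    (fun {a b} hb => (hmemT _).mpr fun I hI => I.mul_mem_left a b ((hmemT b).mp hb I hI))
    (fun {a b} ha => (hmemT _).mpr fun I hI => I.mul_mem_right a b ((hmemT a).mp ha I hI))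
  have hJ0coe : (J0 : Set C) = T := TwoSidedIdeal.coe_mk' _ _ _ _ _ _
  have hJ0closed : IsClosed (J0 : Set C) := by
    rw [hJ0coe]
    exact isClosed_biInter hclosed
  have hTne : T.Nonempty := ⟨0, (hmemT 0).mpr fun I _ => I.zero_mem⟩
  set S : ℝ := ⨆ I ∈ F, infDist x (I : Set C) with hS_def
  have hd0 : (0:ℝ) ≤ infDist x T := infDist_nonneg
  -- boundedness of the family
  have hbdd : BddAbove (Set.range fun I : TwoSidedIdeal C => ⨆ _ : I ∈ F, infDist x (I : Set C)) := by
    refine ⟨‖x‖, ?_⟩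
    rintro r ⟨I, rfl⟩
    dsimp only
    rcases Classical.em (I ∈ F) with h | h
    · rw [ciSup_pos (p := I ∈ F) (f := fun _ => infDist x (I : Set C)) h]
      calc infDist x (I : Set C) ≤ dist x 0 := infDist_le_dist_of_mem I.zero_mem
        _ = ‖x‖ := by simp
    · simp [h, Real.iSup_of_isEmpty, norm_nonneg]
  have hle_S : ∀ I ∈ F, infDist x (I : Set C) ≤ S := by
    intro I hI
    rw [hS_def]
    have h1 : infDist x (I : Set C) = ⨆ _ : I ∈ F, infDist x (I : Set C) := (ciSup_pos (p := I ∈ F) (f := fun _ => infDist x (I : Set C)) hI).symm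
    rw [h1]
    exact le_ciSup hbdd I
  have hS0 : 0 ≤ S := by
    obtain ⟨I, hI⟩ := hF
    exact le_trans infDist_nonneg (hle_S I hI)
  refine le_antisymm ?_ ?_
  · -- sup ≤ infDist to the intersection
    refine Real.iSup_le (fun I => Real.iSup_le (fun hI => ?_) hd0) hd0
    exact infDist_le_infDist_of_subset (Set.biInter_subset_of_mem hI) hTne
  · -- infDist to the intersection ≤ sup
    have hsq : infDist x T ^ 2 ≤ S ^ 2 := by
      calc infDist x T ^ 2 = infDist x (J0 : Set C) ^ 2 := by rw [hJ0coe]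
        _ ≤ infDist (star x * x) (J0 : Set C) := infDist_sq_le J0 x
        _ ≤ S ^ 2 := by
            refine le_of_forall_pos_le_add fun ε hε => ?_
            set t : ℝ := S ^ 2 + ε with ht_def
            have ht : 0 < t := by positivity
            have ha : IsSelfAdjoint (star x * x) := IsSelfAdjoint.star_mul_self x
            set u : C := cfc (fun l : ℝ => max (l - t) 0) (star x * x) with hu_def
            have hu_mem : u ∈ (J0 : Set C) := by
              rw [hJ0coe]
              refine (hmemT u).mpr fun I hI => ?_
              refine cfc_max_sub_mem I (hclosed I hI) ha ht ?_
              calc infDist (star x * x) (I : Set C)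
                  ≤ infDist (star x) (I : Set C) * infDist x (I : Set C) := infDist_mul_le I _ _
                _ = infDist x (I : Set C) ^ 2 := by
                    rw [infDist_star I (hclosed I hI) x, sq]
                _ ≤ S ^ 2 := by
                    have := hle_S I hI
                    exact pow_le_pow_left₀ infDist_nonneg this 2
                _ < t := by rw [ht_def]; linarith
            have hdist : dist (star x * x) u ≤ t := by
              have hspec : ∀ l ∈ spectrum ℝ (star x * x), 0 ≤ l :=
                spectrum_star_mul_self_nonneg
              have hdiff : star x * x - u = cfc (fun l : ℝ => l - max (l - t) 0) (star x * x) := by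
                rw [hu_def, cfc_sub _ _ (star x * x) (continuousOn_id' _) (by fun_prop),
                  cfc_id' ℝ (star x * x)]
              rw [dist_eq_norm, hdiff]
              refine norm_cfc_le ht.le fun l hl => ?_
              have hl0 := hspec l hl
              rw [Real.norm_eq_abs, abs_le]
              constructor
              · have h1 : max (l - t) 0 ≤ l := max_le (by linarith) hl0
                linarith
              · have h2 : l - t ≤ max (l - t) 0 := le_max_left _ _
                linarith
            calc infDist (star x * x) (J0 : Set C) ≤ dist (star x * x) u :=
                  infDist_le_dist_of_mem hu_mem
              _ ≤ t := hdist
              _ = S ^ 2 + ε := ht_def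
    nlinarith [hsq, hd0, hS0]
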